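/- Let n ≥ 1, ρ > 0, and 0 ≤ C < 1. Let F : ℝⁿ → ℝⁿ be continuously differentiable on the open ball B_ρ(0) ⊆ ℝⁿ with F(0) = 0 and with the operator norm of the derivative satisfying ‖DF(x)‖ ≤ C for all x ∈ B_ρ(0). Equip ℝⁿ × ℝⁿ with the Euclidean norm ‖(x,y)‖² = ‖x‖² + ‖y‖². Then the set G = { (x, F(x)) : x ∈ B_ρ(0) and ‖x‖² + ‖F(x)‖² < ρ² } ⊆ ℝⁿ × ℝⁿ is connected. -/

import Mathlib

open Metric

theorem key_ineq (a b C t m : ℝ) (hC0 : 0 ≤ C) (hC1 : C ≤ 1) (ha : 0 ≤ a) (hb : 0 ≤ b)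
    (hba : b ≤ C * a) (ht0 : 0 ≤ t) (ht1 : t ≤ 1) (hm0 : 0 ≤ m)
    (hm1 : m ≤ C * t * a) (hm2 : m ≤ b + C * (1 - t) * a) :
    t^2 * a^2 + m^2 ≤ a^2 + b^2 := by
  have hC2 : C^2 ≤ 1 := by nlinarith
  have hfac2 : 0 ≤ 3*C*a - C^3*a - 3*C^2*b + b := by
    have h1 : C^3*a ≤ C*a := by nlinarith [mul_nonneg hC0 ha]
    have h2 : 3*C^2*b ≤ 3*b := by nlinarith
    linarith
  have ht2 : t^2 ≤ 1 := by nlinarith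
  have ht2a : t^2*a^2 ≤ a^2 := by nlinarith [sq_nonneg a]
  rcases eq_or_lt_of_le hC0 with rfl | hCpos
  · have hm : m = 0 := le_antisymm (by nlinarith) hm0
    have hb' : b = 0 := le_antisymm (by nlinarith) hb
    subst hm; subst hb'; nlinarith
  rcases eq_or_lt_of_le ha with rfl | hapos
  · have hm : m = 0 := le_antisymm (by nlinarith) hm0
    have hb' : b = 0 := le_antisymm (by nlinarith) hb
    subst hm; subst hb'; nlinarith
  rcases le_total (2*C*t*a) (b + C*a) with h | h
  · have h2 : 0 ≤ (C*a - b) * (3*C*a - C^3*a - 3*C^2*b + b) :=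
      mul_nonneg (by linarith) hfac2
    have h0 : (2*C*t*a)^2 ≤ (b+C*a)^2 :=
      pow_le_pow_left₀ (by positivity) h 2
    have h1 : (2*C*t*a)^2*(1+C^2) ≤ (b+C*a)^2*(1+C^2) :=
      mul_le_mul_of_nonneg_right h0 (by positivity)
    have e1 : (2*C*t*a)^2*(1+C^2) = 4*C^2*(t^2*a^2*(1+C^2)) := by ring
    have e2 : (C*a - b) * (3*C*a - C^3*a - 3*C^2*b + b)
        = 4*C^2*(a^2+b^2) - (b+C*a)^2*(1+C^2) := by ring
    have h3 : 4*C^2*(t^2*a^2*(1+C^2)) ≤ 4*C^2*(a^2+b^2) := by linarith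
    have key : t^2*a^2*(1+C^2) ≤ a^2+b^2 := le_of_mul_le_mul_left h3 (by positivity)
    have hmsq : m^2 ≤ (C*t*a)^2 := pow_le_pow_left₀ hm0 hm1 2
    have e3 : (C*t*a)^2 = t^2*a^2*(1+C^2) - t^2*a^2 := by ring
    linarith
  · have hu : 0 ≤ 1 - t := by linarith
    have hu2 : 2*C*a*(1-t) ≤ C*a - b := by nlinarith
    have hmsq : m^2 ≤ (b + C*(1-t)*a)^2 := pow_le_pow_left₀ hm0 hm2 2
    have h5 : 0 ≤ a^2 * (3*C*a - C^3*a - 3*C^2*b + b) := mul_nonneg (sq_nonneg a) hfac2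
    have h7 : 2*C*a*(1-t) * (a^2*(1+C^2)) ≤ (C*a - b) * (a^2*(1+C^2)) :=
      mul_le_mul_of_nonneg_right hu2 (by positivity)
    have e4 : a^2 * (3*C*a - C^3*a - 3*C^2*b + b)
        = 2*C*a * (2*a*(a-C*b)) - (C*a - b) * (a^2*(1+C^2)) := by ring
    have e5 : 2*C*a*(1-t) * (a^2*(1+C^2)) = 2*C*a * ((1-t)*a^2*(1+C^2)) := by ring
    have h6 : 0 ≤ 2*C*a * (2*a*(a-C*b) - (1-t)*a^2*(1+C^2)) := by
      have e6 : 2*C*a * (2*a*(a-C*b) - (1-t)*a^2*(1+C^2))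
          = 2*C*a * (2*a*(a-C*b)) - 2*C*a * ((1-t)*a^2*(1+C^2)) := by ring
      linarith
    have hbr : 0 ≤ 2*a*(a - C*b) - (1-t)*a^2*(1+C^2) :=
      nonneg_of_mul_nonneg_right h6 (by positivity)
    have final : 0 ≤ (1-t) * (2*a*(a-C*b) - (1-t)*a^2*(1+C^2)) := mul_nonneg hu hbr
    have e7 : a^2+b^2 - (t^2*a^2 + (b + C*(1-t)*a)^2)
        = (1-t)*(2*a*(a-C*b) - (1-t)*a^2*(1+C^2)) := by ring
    linarith

set_option maxHeartbeats 1000000 in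
/-- Let `F : ℝⁿ → ℝⁿ` be `C¹` on `B_ρ(0)` with `F(0) = 0` and `‖DF‖ ≤ C < 1` there. Then
the portion of the graph of `F` inside the Euclidean ball of radius `ρ` in `ℝⁿ × ℝⁿ`,
i.e. `{(x, F x) : x ∈ B_ρ(0), ‖x‖² + ‖F x‖² < ρ²}`, is connected. -/
theorem graph_inter_ball_isConnected
    (n : ℕ) (hn : 1 ≤ n) (ρ C : ℝ) (hρ : 0 < ρ) (hC0 : 0 ≤ C) (hC1 : C < 1)
    (F : EuclideanSpace ℝ (Fin n) → EuclideanSpace ℝ (Fin n))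
    (hF : ContDiffOn ℝ 1 F (ball 0 ρ)) (hF0 : F 0 = 0)
    (hDF : ∀ x ∈ ball (0 : EuclideanSpace ℝ (Fin n)) ρ, ‖fderiv ℝ F x‖ ≤ C) :
    IsConnected {p : EuclideanSpace ℝ (Fin n) × EuclideanSpace ℝ (Fin n) |
      p.1 ∈ ball (0 : EuclideanSpace ℝ (Fin n)) ρ ∧ p.2 = F p.1 ∧
        ‖p.1‖ ^ 2 + ‖F p.1‖ ^ 2 < ρ ^ 2} := by
  set S : Set (EuclideanSpace ℝ (Fin n)) := {x : EuclideanSpace ℝ (Fin n) | x ∈ ball 0 ρ ∧ ‖x‖ ^ 2 + ‖F x‖ ^ 2 < ρ ^ 2} with hS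
  -- Lipschitz estimate on the ball
  have hlip : ∀ x ∈ ball (0 : EuclideanSpace ℝ (Fin n)) ρ, ∀ y ∈ ball (0 : EuclideanSpace ℝ (Fin n)) ρ, ‖F y - F x‖ ≤ C * ‖y - x‖ :=
    fun x hx y hy => (convex_ball 0 ρ).norm_image_sub_le_of_norm_fderiv_le
      (fun z hz => (hF.differentiableOn one_ne_zero).differentiableAt (isOpen_ball.mem_nhds hz))
      hDF hx hy
  have h0ball : (0 : EuclideanSpace ℝ (Fin n)) ∈ ball (0 : EuclideanSpace ℝ (Fin n)) ρ := mem_ball_self hρ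
  have hFx : ∀ x ∈ ball (0 : EuclideanSpace ℝ (Fin n)) ρ, ‖F x‖ ≤ C * ‖x‖ := by
    intro x hx
    have := hlip 0 h0ball x hx
    simpa [hF0] using this
  -- S is star-shaped about 0
  have hstar : ∀ y ∈ S, ∀ q : ℝ, 0 ≤ q → q ≤ 1 → q • y ∈ S := by
    intro y hy q hq0 hq1
    obtain ⟨hyb, hylt⟩ := hy
    have hynorm : ‖y‖ < ρ := by simpa using hyb
    have hqy : ‖q • y‖ = q * ‖y‖ := by
      rw [norm_smul, Real.norm_eq_abs, abs_of_nonneg hq0]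
    have hqyball : q • y ∈ ball (0 : EuclideanSpace ℝ (Fin n)) ρ := by
      rw [mem_ball_zero_iff, hqy]
      calc q * ‖y‖ ≤ 1 * ‖y‖ := by
            exact mul_le_mul_of_nonneg_right hq1 (norm_nonneg y)
        _ < ρ := by simpa using hynorm
    refine ⟨hqyball, ?_⟩
    have hm1 : ‖F (q • y)‖ ≤ C * q * ‖y‖ := by
      have := hFx (q • y) hqyball
      rw [hqy] at this; linarith [this]
    have hm2 : ‖F (q • y)‖ ≤ ‖F y‖ + C * (1 - q) * ‖y‖ := by
      have hd := hlip y hyb (q • y) hqyball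
      have hdn : ‖q • y - y‖ = (1 - q) * ‖y‖ := by
        have : q • y - y = (q - 1) • y := by
          rw [sub_smul, one_smul]
        rw [this, norm_smul, Real.norm_eq_abs, abs_of_nonpos (by linarith)]
        ring
      rw [hdn] at hd
      calc ‖F (q • y)‖ ≤ ‖F y‖ + ‖F (q • y) - F y‖ := by
            have := norm_sub_norm_le (F (q • y)) (F y); linarith [norm_sub_rev (F (q•y)) (F y) ▸ this]
        _ ≤ ‖F y‖ + C * (1 - q) * ‖y‖ := by linarith
    have hkey := key_ineq ‖y‖ ‖F y‖ C q ‖F (q • y)‖ hC0 hC1.le (norm_nonneg _)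
      (norm_nonneg _) (hFx y hyb) hq0 hq1 (norm_nonneg _) hm1 hm2
    have : ‖q • y‖ ^ 2 + ‖F (q • y)‖ ^ 2 ≤ ‖y‖ ^ 2 + ‖F y‖ ^ 2 := by
      rw [hqy]; calc (q * ‖y‖)^2 + ‖F (q • y)‖^2 = q^2 * ‖y‖^2 + ‖F (q • y)‖^2 := by ring
        _ ≤ ‖y‖ ^ 2 + ‖F y‖ ^ 2 := hkey
    linarith
  have h0S : (0 : EuclideanSpace ℝ (Fin n)) ∈ S := by
    constructor
    · exact h0ball
    · simp only [hF0, norm_zero]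
      nlinarith [pow_pos hρ 2]
  have hSpc : IsPathConnected S := by
    refine ⟨0, h0S, ?_⟩
    intro y hy
    apply JoinedIn.of_segment_subset
    intro z hz
    obtain ⟨p, q, hp, hq, hpq, rfl⟩ := hz
    have : p • (0 : EuclideanSpace ℝ (Fin n)) + q • y = q • y := by simp
    rw [this]
    exact hstar y hy q hq (by linarith)
  have hSconn : IsConnected S := hSpc.isConnected
  have himg : {p : EuclideanSpace ℝ (Fin n) × EuclideanSpace ℝ (Fin n) | p.1 ∈ ball (0 : EuclideanSpace ℝ (Fin n)) ρ ∧ p.2 = F p.1 ∧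
      ‖p.1‖ ^ 2 + ‖F p.1‖ ^ 2 < ρ ^ 2} = (fun x => (x, F x)) '' S := by
    ext p
    constructor
    · rintro ⟨h1, h2, h3⟩
      exact ⟨p.1, ⟨h1, h3⟩, by simp [Prod.ext_iff, h2]⟩
    · rintro ⟨x, ⟨hx1, hx2⟩, rfl⟩
      exact ⟨hx1, rfl, hx2⟩
  rw [himg]
  exact hSconn.image _ (continuousOn_id.prodMk (hF.continuousOn.mono fun x hx => hx.1))
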